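/- Suppose an observation signal O is action sufficient in a dynamic decision network D. Then the conditional reward model equals the interventional reward model, P_D(R | O, A=â) = P_D(R | O, do(A=â)), and the conditional transition model equals the interventional transition model, P_D(S' | O, A=â) = P_D(S' | O, do(A=â)), for all â with positive conditional probability. -/
import Mathlib


open Finset

/-- Joint distribution of a (dynamic decision network, viewed as a) causal
Bayesian network. -/
noncomputable def bnJoint {ι : Type*} [Fintype ι] {Val : ι → Type*}
    (cpt : ∀ i, (∀ j, Val j) → Val i → ℝ) (v : ∀ i, Val i) : ℝ :=
  ∏ i, cpt i v (v i)

/-- Truncated (interventional) distribution `P_{do(A=â)}`. -/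
noncomputable def bnDoJoint {ι : Type*} [Fintype ι] [DecidableEq ι] {Val : ι → Type*}
    [∀ i, DecidableEq (Val i)]
    (cpt : ∀ i, (∀ j, Val j) → Val i → ℝ) (A : ι) (ahat : Val A)
    (v : ∀ i, Val i) : ℝ :=
  (∏ i ∈ Finset.univ.erase A, cpt i v (v i)) * (if v A = ahat then 1 else 0)

-- Probability of an event (latent variables marginalized by summing over all
-- joint assignments).
open Classical in
noncomputable def prEvent {ι : Type*} [Fintype ι] [DecidableEq ι] {Val : ι → Type*}
    [∀ i, Fintype (Val i)]
    (P : (∀ i, Val i) → ℝ) (E : (∀ i, Val i) → Prop) : ℝ :=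
  ∑ v : ∀ i, Val i, if E v then P v else 0

/-- Conditional probability as a ratio of event probabilities. -/
noncomputable def condPr {ι : Type*} [Fintype ι] [DecidableEq ι] {Val : ι → Type*}
    [∀ i, Fintype (Val i)]
    (P : (∀ i, Val i) → ℝ) (E F : (∀ i, Val i) → Prop) : ℝ :=
  prEvent P (fun v => E v ∧ F v) / prEvent P F

/-- `v` agrees with the reference assignment `x` on the variables in `S`. -/
def Agrees {ι : Type*} {Val : ι → Type*} (S : Finset ι) (x v : ∀ i, Val i) : Prop :=
  ∀ j ∈ S, v j = x j

/-- in a dynamic decision network `D` (two time slices, reward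
`R` in the current slice, next-slice state variables `S'`, belief variable
`B`), if the observation signal `O` is action sufficient (all parents of the
action `A` lie in `O ∪ {B}`), then the conditional reward model equals the
interventional reward model, `P_D(R | O, B, A=â) = P_D(R | O, B, do(A=â))`,
and the conditional transition model equals the interventional transition
model, `P_D(S' | O, B, A=â) = P_D(S' | O, B, do(A=â))`. -/
theorem ddn_reward_transition_obs_eq_do
    {ι : Type*} [Fintype ι] [DecidableEq ι]
    (Val : ι → Type*) [∀ i, Fintype (Val i)] [∀ i, DecidableEq (Val i)]
    (pa : ι → Finset ι) (ord : ι → ℕ)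
    (hacyc : ∀ i j, j ∈ pa i → ord j < ord i)
    (cpt : ∀ i, (∀ j, Val j) → Val i → ℝ)
    (hlocal : ∀ i (v w : ∀ j, Val j), (∀ j ∈ pa i, v j = w j) → cpt i v = cpt i w)
    (hnonneg : ∀ i (v : ∀ j, Val j) (x : Val i), 0 ≤ cpt i v x)
    (hsum : ∀ i (v : ∀ j, Val j), ∑ x : Val i, cpt i v x = 1)
    (slice : ι → Fin 2)
    (A R B : ι) (O S' : Finset ι)
    -- two-slice causal structure: edges respect the temporal order
    (htime : ∀ i j : ι, i ∈ pa j → ¬ (slice i = 1 ∧ slice j = 0))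
    (hsliceA : slice A = 0) (hsliceR : slice R = 0) (hsliceB : slice B = 0)
    (hO : ∀ j ∈ O, slice j = 0) (hS' : ∀ j ∈ S', slice j = 1)
    (hAO : A ∉ O) (hAB : A ≠ B) (hARv : A ≠ R)
    (hRO : R ∉ O) (hRB : R ≠ B)
    (hAS' : A ∉ S') (hS'dis : Disjoint S' (insert B O))
    -- action sufficiency: all parents of A lie in O ∪ {B}
    (hActionSufficient : pa A ⊆ insert B O)
    (x : ∀ i, Val i) (ahat : Val A)
    (hpos : 0 < prEvent (bnJoint cpt) (fun v => Agrees (insert B O) x v ∧ v A = ahat)) :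
    (condPr (bnDoJoint cpt A ahat) (Agrees {R} x) (Agrees (insert B O) x)
        = condPr (bnJoint cpt) (Agrees {R} x)
            (fun v => Agrees (insert B O) x v ∧ v A = ahat))
    ∧ (condPr (bnDoJoint cpt A ahat) (Agrees S' x) (Agrees (insert B O) x)
        = condPr (bnJoint cpt) (Agrees S' x)
            (fun v => Agrees (insert B O) x v ∧ v A = ahat)) := by
  classical
  set F : (∀ i, Val i) → Prop := Agrees (insert B O) x with hF
  set c : ℝ := cpt A x ahat with hc
  -- congruence for prEvent
  have prcong : ∀ (P : (∀ i, Val i) → ℝ) (G1 G2 : (∀ i, Val i) → Prop),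
      (∀ v, G1 v ↔ G2 v) → prEvent P G1 = prEvent P G2 := by
    intro P G1 G2 h
    unfold prEvent
    exact Finset.sum_congr rfl (fun v _ => by rw [if_congr (h v) rfl rfl])
  -- key identity
  have key : ∀ (G : (∀ i, Val i) → Prop), (∀ v, G v → F v) →
      prEvent (bnJoint cpt) (fun v => G v ∧ v A = ahat)
        = c * prEvent (bnDoJoint cpt A ahat) G := by
    intro G hG
    unfold prEvent
    rw [Finset.mul_sum]
    refine Finset.sum_congr rfl (fun v _ => ?_)
    by_cases hg : G v
    · have hagree : cpt A v = cpt A x :=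
        hlocal A v x (fun j hj => hG v hg j (hActionSufficient hj))
      by_cases ha : v A = ahat
      · rw [if_pos ⟨hg, ha⟩, if_pos hg]
        unfold bnJoint bnDoJoint
        rw [if_pos ha, mul_one,
          ← Finset.mul_prod_erase Finset.univ _ (Finset.mem_univ A),
          hagree, ha]
      · rw [if_neg (fun h => ha h.2), if_pos hg]
        unfold bnDoJoint
        rw [if_neg ha, mul_zero, mul_zero]
    · rw [if_neg (fun h => hg h.1), if_neg hg, mul_zero]
  have main : ∀ E : (∀ i, Val i) → Prop,
      condPr (bnDoJoint cpt A ahat) E F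
        = condPr (bnJoint cpt) E (fun v => F v ∧ v A = ahat) := by
    intro E
    unfold condPr
    have h1 : prEvent (bnJoint cpt) (fun v => E v ∧ (F v ∧ v A = ahat))
        = c * prEvent (bnDoJoint cpt A ahat) (fun v => E v ∧ F v) := by
      rw [prcong (bnJoint cpt) _ (fun v => (E v ∧ F v) ∧ v A = ahat)
        (fun v => by tauto)]
      exact key _ (fun v h => h.2)
    have h2 : prEvent (bnJoint cpt) (fun v => F v ∧ v A = ahat)
        = c * prEvent (bnDoJoint cpt A ahat) F := key F (fun v h => h)
    have hc0 : c ≠ 0 := by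
      intro h0
      rw [h2, h0, zero_mul] at hpos
      exact lt_irrefl 0 hpos
    rw [h1, h2, mul_div_mul_left _ _ hc0]
  exact ⟨main _, main _⟩
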